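/- Let (T,Σ,μ) be a measure space, {F_n : n ≥ 1} a sequence of nonempty closed-valued lower measurable correspondences T ⇉ ℝ^ℓ such that at least one F_n is compact-valued and ⋂_n F_n(t) ≠ ∅ for all t. Then the intersection correspondence t ↦ ⋂_{n≥1} F_n(t) has a measurable selection. -/

import Mathlib

open MeasureTheory Metric Filter Topology TopologicalSpace

lemma krn_selection {E : Type*} [MetricSpace E] [CompleteSpace E]
    [SecondCountableTopology E] [Nonempty E] [MeasurableSpace E] [BorelSpace E]
    {T : Type*} [MeasurableSpace T] (G : T → Set E)
    (hne : ∀ t, (G t).Nonempty) (hcl : ∀ t, IsClosed (G t))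
    (hm : ∀ (c : E) (r : ℝ), MeasurableSet {t | (G t ∩ Metric.ball c r).Nonempty}) :
    ∃ f : T → E, Measurable f ∧ ∀ t, f t ∈ G t := by
  classical
  set x : ℕ → E := denseSeq E with hx
  have hdr : DenseRange x := denseRange_denseSeq E
  -- existence of approximating indices
  have hex : ∀ (r : ℝ), 0 < r → ∀ t (j : ℕ),
      (G t ∩ ball (x j) r).Nonempty →
      ∀ (r' : ℝ), 0 < r' → ∃ i, (G t ∩ ball (x i) r').Nonempty ∧
        dist (x i) (x j) < r' + r := by
    rintro r hr t j ⟨y, hyG, hyb⟩ r' hr'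
    obtain ⟨i, hi⟩ := hdr.exists_dist_lt y hr'
    refine ⟨i, ⟨y, hyG, by simpa [mem_ball, dist_comm] using hi⟩, ?_⟩
    calc dist (x i) (x j) ≤ dist (x i) y + dist y (x j) := dist_triangle _ _ _
      _ < r' + r := by
          rw [mem_ball] at hyb
          exact add_lt_add (by simpa [dist_comm] using hi) hyb
  have hex0 : ∀ t, ∃ i, (G t ∩ ball (x i) 1).Nonempty := by
    intro t
    obtain ⟨y, hy⟩ := hne t
    obtain ⟨i, hi⟩ := hdr.exists_dist_lt y one_pos
    exact ⟨i, y, hy, by simpa [mem_ball, dist_comm] using hi⟩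
  -- the recursive pick
  let Q : ℕ → ℕ → T → ℕ → Prop := fun k j t i =>
    (G t ∩ ball (x i) ((1/2) ^ (k+1))).Nonempty ∧
      dist (x i) (x j) < (1/2) ^ (k+1) + (1/2) ^ k
  let pick : ℕ → ℕ → T → ℕ := fun k j t =>
    if h : ∃ i, Q k j t i then Nat.find h else 0
  let g : ℕ → T → ℕ := fun k => Nat.rec (fun t => Nat.find (hex0 t))
    (fun k gk t => pick k (gk t) t) k
  have hg0 : ∀ t, g 0 t = Nat.find (hex0 t) := fun _ => rfl
  have hgS : ∀ k t, g (k+1) t = pick k (g k t) t := fun _ _ => rfl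
  have key : ∀ k, Measurable (g k) ∧
      ∀ t, (G t ∩ ball (x (g k t)) ((1/2) ^ k)).Nonempty := by
    intro k
    induction k with
    | zero =>
      constructor
      · exact measurable_find hex0 fun i => hm (x i) 1
      · intro t
        simpa [hg0] using Nat.find_spec (hex0 t)
    | succ k ih =>
      obtain ⟨ihm, ihn⟩ := ih
      have hexk : ∀ t, ∃ i, Q k (g k t) t i := by
        intro t
        exact hex _ (by positivity) t _ (ihn t) _ (by positivity)
      have heq : (g (k+1)) = fun t => Nat.find (hexk t) := by
        funext t
        rw [hgS]
        exact dif_pos (hexk t)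
      constructor
      · rw [heq]
        refine measurable_find hexk fun i => ?_
        have : {t | Q k (g k t) t i} =
            {t | (G t ∩ ball (x i) ((1/2) ^ (k+1))).Nonempty} ∩
              (g k) ⁻¹' {j | dist (x i) (x j) < (1/2) ^ (k+1) + (1/2) ^ k} := by
          ext t; rfl
        rw [this]
        exact (hm _ _).inter (ihm trivial)
      · intro t
        rw [heq]
        exact (Nat.find_spec (hexk t)).1
  -- distance between consecutive approximations
  have hdist : ∀ k t, dist (x (g k t)) (x (g (k+1) t)) ≤ (3/2) * (1/2) ^ k := by
    intro k t
    have hexk : ∀ t, ∃ i, Q k (g k t) t i := fun t =>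
      hex _ (by positivity) t _ ((key k).2 t) _ (by positivity)
    have : g (k+1) t = Nat.find (hexk t) := by rw [hgS]; exact dif_pos (hexk t)
    have h2 := (Nat.find_spec (hexk t)).2
    rw [← this] at h2
    rw [dist_comm]
    calc dist (x (g (k+1) t)) (x (g k t)) ≤ (1/2) ^ (k+1) + (1/2) ^ k := le_of_lt h2
      _ = (3/2) * (1/2) ^ k := by ring
  have hcauchy : ∀ t, CauchySeq (fun k => x (g k t)) :=
    fun t => cauchySeq_of_le_geometric (1/2) (3/2) (by norm_num)
      (fun k => hdist k t)
  choose f hf using fun t => cauchySeq_tendsto_of_complete (hcauchy t)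
  refine ⟨f, ?_, ?_⟩
  · refine measurable_of_tendsto_metrizable (fun k => ?_) (tendsto_pi_nhds.2 hf)
    exact (measurable_from_top).comp (key k).1
  · intro t
    have hid : Tendsto (fun k => Metric.infDist (x (g k t)) (G t)) atTop
        (𝓝 (Metric.infDist (f t) (G t))) :=
      ((continuous_infDist_pt (G t)).continuousAt.tendsto.comp (hf t))
    have hle : ∀ k, Metric.infDist (x (g k t)) (G t) ≤ (1/2) ^ k := by
      intro k
      obtain ⟨y, hyG, hyb⟩ := (key k).2 t
      calc Metric.infDist (x (g k t)) (G t) ≤ dist (x (g k t)) y :=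
            Metric.infDist_le_dist_of_mem hyG
        _ ≤ (1/2) ^ k := by rw [mem_ball, dist_comm] at hyb; exact le_of_lt hyb
    have h0 : Metric.infDist (f t) (G t) ≤ 0 :=
      le_of_tendsto_of_tendsto hid
        (tendsto_pow_atTop_nhds_zero_of_lt_one (by norm_num) (by norm_num))
        (Eventually.of_forall hle)
    have : Metric.infDist (f t) (G t) = 0 :=
      le_antisymm h0 Metric.infDist_nonneg
    exact ((hcl t).mem_iff_infDist_zero (hne t)).2 this


/-- Himmelberg intersection + Kuratowski–Ryll-Nardzewski: the intersection of a sequence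
of nonempty closed-valued lower measurable correspondences, one of which is
compact-valued, has a measurable selection whenever the intersection is nonempty. -/
theorem intersection_correspondence_measurable_selection {ℓ : ℕ} {T : Type*}
    [MeasurableSpace T] (μ : Measure T) (F : ℕ → T → Set (Fin ℓ → ℝ))
    (hne : ∀ n t, (F n t).Nonempty) (hcl : ∀ n t, IsClosed (F n t))
    (hlm : ∀ n, ∀ V : Set (Fin ℓ → ℝ), IsOpen V →
      MeasurableSet {t | (F n t ∩ V).Nonempty})
    (hcompact : ∃ n₀, ∀ t, IsCompact (F n₀ t))
    (hint : ∀ t, (⋂ n, F n t).Nonempty) :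
    ∃ f : T → Fin ℓ → ℝ, Measurable f ∧ ∀ t, f t ∈ ⋂ n, F n t := by
  classical
  set G : T → Set (Fin ℓ → ℝ) := fun t => ⋂ n, F n t with hG
  obtain ⟨n₀, hcomp⟩ := hcompact
  set x : ℕ → (Fin ℓ → ℝ) := denseSeq _ with hx
  have hdr : DenseRange x := denseRange_denseSeq _
  -- Himmelberg: lower measurability of G on balls
  have hmG : ∀ (c : Fin ℓ → ℝ) (r : ℝ), MeasurableSet {t | (G t ∩ ball c r).Nonempty} := by
    intro c r
    by_cases hr : 0 < r
    · have hset : {t | (G t ∩ ball c r).Nonempty} =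
          ⋃ (q : ℚ) (_ : 0 < (q : ℝ)) (_ : (q : ℝ) < r), ⋂ (m : ℕ),
            ⋃ (j : ℕ) (_ : dist (x j) c ≤ (q : ℝ)), ⋂ (n : ℕ),
              {t | (F n t ∩ ball (x j) (1 / ((m:ℝ) + 1))).Nonempty} := by
        ext t
        simp only [Set.mem_iUnion, Set.mem_iInter, Set.mem_setOf_eq]
        constructor
        · rintro ⟨y, hyG, hyb⟩
          rw [mem_ball] at hyb
          obtain ⟨q, hq1, hq2⟩ := exists_rat_btwn hyb
          refine ⟨q, lt_of_le_of_lt dist_nonneg hq1, hq2, fun m => ?_⟩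
          have hmin : (0:ℝ) < min (1 / ((m:ℝ) + 1)) ((q:ℝ) - dist y c) := by
            apply lt_min
            · positivity
            · linarith
          obtain ⟨j, hj⟩ := hdr.exists_dist_lt y hmin
          refine ⟨j, ?_, fun n => ?_⟩
          · calc dist (x j) c ≤ dist (x j) y + dist y c := dist_triangle _ _ _
              _ ≤ ((q:ℝ) - dist y c) + dist y c := by
                  have := (lt_min_iff.1 hj).2
                  rw [dist_comm] at this
                  linarith
              _ = (q:ℝ) := by ring
          · refine ⟨y, Set.mem_iInter.1 hyG n, ?_⟩
            rw [mem_ball]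
            exact lt_of_lt_of_le hj (min_le_left _ _)
        · rintro ⟨q, hq0, hqr, H⟩
          choose j hj1 hj2 using H
          have hk : ∀ m, ∃ z, z ∈ F n₀ t ∧ dist z (x (j m)) < 1 / ((m:ℝ) + 1) := by
            intro m
            obtain ⟨z, hz1, hz2⟩ := hj2 m n₀
            exact ⟨z, hz1, by rwa [mem_ball] at hz2⟩
          choose k hk1 hk2 using hk
          obtain ⟨a, haF, φ, hφ, hφt⟩ := (hcomp t).tendsto_subseq hk1
          -- x ∘ j ∘ φ tends to a
          have hxj : Tendsto (fun m => x (j (φ m))) atTop (𝓝 a) := by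
            rw [tendsto_iff_dist_tendsto_zero]
            have hb : ∀ m, dist (x (j (φ m))) a ≤
                1 / ((m:ℝ) + 1) + dist (k (φ m)) a := by
              intro m
              calc dist (x (j (φ m))) a ≤ dist (x (j (φ m))) (k (φ m)) +
                    dist (k (φ m)) a := dist_triangle _ _ _
                _ ≤ 1 / ((m:ℝ) + 1) + dist (k (φ m)) a := by
                    have h1 := hk2 (φ m)
                    rw [dist_comm] at h1
                    have h2 : (1:ℝ) / (φ m + 1) ≤ 1 / (m + 1) := by
                      apply one_div_le_one_div_of_le
                      · positivity
                      · have : (m:ℝ) ≤ φ m := by exact_mod_cast hφ.le_apply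
                        linarith
                    linarith
            have hlim : Tendsto (fun (m:ℕ) => 1 / ((m:ℝ) + 1) + dist (k (φ m)) a)
                atTop (𝓝 0) := by
              have h1 : Tendsto (fun (m:ℕ) => 1 / ((m:ℝ) + 1)) atTop (𝓝 0) :=
                tendsto_one_div_add_atTop_nhds_zero_nat
              have h2 : Tendsto (fun m => dist (k (φ m)) a) atTop (𝓝 0) :=
                (tendsto_iff_dist_tendsto_zero.1 hφt)
              simpa using h1.add h2
            exact squeeze_zero (fun m => dist_nonneg) hb hlim
          refine ⟨a, ?_, ?_⟩
          · rw [hG]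
            refine Set.mem_iInter.2 fun n => ?_
            have : ∀ m, ∃ z, z ∈ F n t ∧ dist z (x (j (φ m))) < 1 / ((φ m : ℝ) + 1) := by
              intro m
              obtain ⟨z, hz1, hz2⟩ := hj2 (φ m) n
              exact ⟨z, hz1, by rwa [mem_ball] at hz2⟩
            choose z hz1 hz2 using this
            have hz : Tendsto z atTop (𝓝 a) := by
              rw [tendsto_iff_dist_tendsto_zero]
              have hb : ∀ m, dist (z m) a ≤ 1 / ((m:ℝ) + 1) + dist (x (j (φ m))) a := by
                intro m
                calc dist (z m) a ≤ dist (z m) (x (j (φ m))) +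
                      dist (x (j (φ m))) a := dist_triangle _ _ _
                  _ ≤ 1 / ((m:ℝ) + 1) + dist (x (j (φ m))) a := by
                      have h1 := hz2 m
                      have h2 : (1:ℝ) / (φ m + 1) ≤ 1 / (m + 1) := by
                        apply one_div_le_one_div_of_le
                        · positivity
                        · have : (m:ℝ) ≤ φ m := by exact_mod_cast hφ.le_apply
                          linarith
                      linarith
              have hlim : Tendsto (fun (m:ℕ) => 1 / ((m:ℝ) + 1) + dist (x (j (φ m))) a)
                  atTop (𝓝 0) := by
                have h1 : Tendsto (fun (m:ℕ) => 1 / ((m:ℝ) + 1)) atTop (𝓝 0) :=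
                  tendsto_one_div_add_atTop_nhds_zero_nat
                have h2 : Tendsto (fun m => dist (x (j (φ m))) a) atTop (𝓝 0) :=
                  (tendsto_iff_dist_tendsto_zero.1 hxj)
                simpa using h1.add h2
              exact squeeze_zero (fun m => dist_nonneg) hb hlim
            have := mem_closure_of_tendsto hz (Eventually.of_forall hz1)
            rwa [(hcl n t).closure_eq] at this
          · rw [mem_ball]
            have hda : Tendsto (fun m => dist (x (j (φ m))) c) atTop
                (𝓝 (dist a c)) := hxj.dist tendsto_const_nhds
            have hled : dist a c ≤ (q : ℝ) :=
              le_of_tendsto hda (Eventually.of_forall fun m => hj1 (φ m))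
            linarith
      rw [hset]
      refine MeasurableSet.iUnion fun q => ?_
      refine MeasurableSet.iUnion fun _ => ?_
      refine MeasurableSet.iUnion fun _ => ?_
      refine MeasurableSet.iInter fun m => ?_
      refine MeasurableSet.iUnion fun j => ?_
      refine MeasurableSet.iUnion fun _ => ?_
      exact MeasurableSet.iInter fun n => hlm n _ isOpen_ball
    · have : ball c r = ∅ := ball_eq_empty.2 (le_of_not_gt hr)
      simp [this]
  obtain ⟨f, hfm, hfG⟩ := krn_selection G hint
    (fun t => isClosed_iInter fun n => hcl n t) hmG
  exact ⟨f, hfm, hfG⟩
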